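/- Let r = (r_0, r_1) ∈ ℝ² and suppose that either r = (x, x+1) with −1 ≤ x < 1, or r = (x, −x−1) with −1 ≤ x ≤ 0. Then r ∈ D_2 ∖ D_2^{(0)}: for every z ∈ ℤ² the orbit (τ_r^k(z))_{k≥0} is ultimately periodic, but there exists z ∈ ℤ² such that τ_r^k(z) ≠ (0,0) for all k ∈ ℕ. -/

import Mathlib

/-- The shift radix system `τ_r : ℤ^d → ℤ^d`. -/
noncomputable def srsMap (d : ℕ) (r : Fin d → ℝ) (z : Fin d → ℤ) : Fin d → ℤ :=
  fun i =>
    if h : (i : ℕ) + 1 < d then z ⟨(i : ℕ) + 1, h⟩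
    else -⌊∑ j, r j * (z j : ℝ)⌋

lemma srs_stab (f : ℤ → ℤ) (hf : ∀ s, (f s).natAbs ≤ s.natAbs) (s0 : ℤ) :
    ∃ K, ∀ k, K ≤ k → (f^[k] s0).natAbs = (f^[K] s0).natAbs := by
  have hmono : ∀ j k, j ≤ k → (f^[k] s0).natAbs ≤ (f^[j] s0).natAbs := by
    intro j k hjk
    induction k with
    | zero => simp_all
    | succ n ih =>
      rcases Nat.lt_or_ge j (n + 1) with h | h
      · have h1 := ih (Nat.lt_succ_iff.mp h)
        calc (f^[n + 1] s0).natAbs = (f (f^[n] s0)).natAbs := by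
              rw [Function.iterate_succ_apply']
          _ ≤ (f^[n] s0).natAbs := hf _
          _ ≤ _ := h1
      · have : j = n + 1 := le_antisymm hjk h
        subst this; exact le_rfl
  obtain ⟨K, hK⟩ : ∃ K, (f^[K] s0).natAbs = sInf (Set.range fun k => (f^[k] s0).natAbs) := by
    have h := Nat.sInf_mem (⟨(f^[0] s0).natAbs, 0, rfl⟩ :
      (Set.range fun k => (f^[k] s0).natAbs).Nonempty)
    obtain ⟨K, hK⟩ := h
    exact ⟨K, hK⟩
  refine ⟨K, fun k hk => le_antisymm (hmono K k hk) ?_⟩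
  rw [hK]; exact Nat.sInf_le ⟨k, rfl⟩

lemma srs_evconst (f : ℤ → ℤ) (hf : ∀ s, (f s).natAbs ≤ s.natAbs)
    (hf2 : ∀ s : ℤ, 0 < s → f s ≠ -s) (s0 : ℤ) :
    ∃ K, ∀ k, K ≤ k → f^[k + 1] s0 = f^[k] s0 := by
  obtain ⟨K0, hK0⟩ := srs_stab f hf s0
  set v := f^[K0] s0 with hv
  set u := f v with hu
  have huv : f^[K0 + 1] s0 = u := by rw [Function.iterate_succ_apply']
  have hnu : u.natAbs = v.natAbs := by rw [← huv]; exact hK0 _ (Nat.le_succ _)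
  have hnfu : (f u).natAbs = v.natAbs := by
    have h2 : f^[K0 + 2] s0 = f u := by rw [Function.iterate_succ_apply', huv]
    rw [← h2]; exact hK0 _ (by omega)
  have hfix : f u = u := by
    rcases eq_or_ne u 0 with h0 | h0
    · have hz : (f u).natAbs = 0 := by rw [hnfu, ← hnu, h0, Int.natAbs_zero]
      rw [Int.natAbs_eq_zero.mp hz, h0]
    · rcases Int.natAbs_eq_natAbs_iff.mp (hnfu.trans hnu.symm) with h | h
      · exact h
      · rcases h0.lt_or_gt with hneg | hpos
        · rcases Int.natAbs_eq_natAbs_iff.mp hnu with h2 | h2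
          · have hfu : f u = u := (congrArg f h2).trans hu.symm
            have : u = -u := hfu.symm.trans h
            omega
          · exfalso
            have hvpos : 0 < v := by omega
            exact hf2 v hvpos (by rw [← hu, h2])
        · exact absurd h (hf2 u hpos)
  refine ⟨K0 + 1, fun k hk => ?_⟩
  have hconst : ∀ k, K0 + 1 ≤ k → f^[k] s0 = u := by
    intro k hk
    induction k, hk using Nat.le_induction with
    | base => exact huv
    | succ n hn ih => rw [Function.iterate_succ_apply', ih, hfix]
  rw [hconst k hk, hconst (k + 1) (by omega)]

lemma srs_evalt (g : ℤ → ℤ) (hg : ∀ s, (g s).natAbs ≤ s.natAbs)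
    (hg2 : ∀ s : ℤ, s ≠ 0 → g s ≠ s) (d0 : ℤ) :
    ∃ K, ∀ k, K ≤ k → g^[k + 1] d0 = -(g^[k] d0) := by
  obtain ⟨K0, hK0⟩ := srs_stab g hg d0
  refine ⟨K0, fun k hk => ?_⟩
  have h1 : (g^[k] d0).natAbs = (g^[K0] d0).natAbs := hK0 k hk
  have h2 : (g^[k + 1] d0).natAbs = (g^[K0] d0).natAbs := hK0 (k + 1) (by omega)
  rw [Function.iterate_succ_apply'] at h2 ⊢
  set u := g^[k] d0 with hu
  rcases eq_or_ne u 0 with h0 | h0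
  · rw [h0] at h2 ⊢
    rw [h0, Int.natAbs_zero] at h1
    have : (g 0).natAbs = 0 := h2.trans h1.symm
    simp [Int.natAbs_eq_zero.mp this]
  · rcases Int.natAbs_eq_natAbs_iff.mp (h2.trans h1.symm) with h | h
    · exact absurd h (hg2 u h0)
    · exact h

lemma srs0 (r : Fin 2 → ℝ) (w : Fin 2 → ℤ) : srsMap 2 r w 0 = w 1 := by
  simp [srsMap]

lemma srs1 (r : Fin 2 → ℝ) (w : Fin 2 → ℤ) :
    srsMap 2 r w 1 = -⌊r 0 * w 0 + r 1 * w 1⌋ := by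
  simp [srsMap, Fin.sum_univ_two]

lemma floor_bound (y : ℝ) (hy : |y| ≤ 1) (t : ℤ) : (-⌊y * (t : ℝ)⌋).natAbs ≤ t.natAbs := by
  have ht : |(t : ℝ)| = ((t.natAbs : ℤ) : ℝ) := by
    rw [← Int.abs_eq_natAbs, Int.cast_abs]
  have habs : |y * (t : ℝ)| ≤ ((t.natAbs : ℤ) : ℝ) := by
    rw [abs_mul, ← ht]
    nlinarith [abs_nonneg (t : ℝ), abs_nonneg y]
  have h1 : ⌊y * (t : ℝ)⌋ ≤ (t.natAbs : ℤ) := by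
    have h := Int.floor_le_floor (le_trans (le_abs_self (y * (t : ℝ))) habs)
    rwa [Int.floor_intCast] at h
  have h2 : -((t.natAbs : ℤ)) ≤ ⌊y * (t : ℝ)⌋ := by
    apply Int.le_floor.mpr
    have := neg_abs_le (y * (t : ℝ))
    push_cast
    linarith
  omega

lemma srs_shift (r : Fin 2 → ℝ) (z : Fin 2 → ℤ) (n : ℕ) :
    ((srsMap 2 r)^[n] z) 1 = ((srsMap 2 r)^[n + 1] z) 0 := by
  rw [Function.iterate_succ_apply', srs0]

lemma srs_rec (r : Fin 2 → ℝ) (z : Fin 2 → ℤ) (n : ℕ) :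
    ((srsMap 2 r)^[n + 2] z) 0
      = -⌊r 0 * (((srsMap 2 r)^[n] z) 0 : ℝ) + r 1 * (((srsMap 2 r)^[n + 1] z) 0 : ℝ)⌋ := by
  rw [← srs_shift r z (n + 1), Function.iterate_succ_apply', srs1, srs_shift r z n,
    Function.iterate_succ_apply']

lemma fin2_ext {w v : Fin 2 → ℤ} (h0 : w 0 = v 0) (h1 : w 1 = v 1) : w = v := by
  funext i
  fin_cases i
  · exact h0
  · exact h1

lemma srs_per (r : Fin 2 → ℝ) (z : Fin 2 → ℤ) (K : ℕ)
    (h2 : ∀ k, K ≤ k → ((srsMap 2 r)^[k + 2] z) 0 = ((srsMap 2 r)^[k] z) 0) :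
    (srsMap 2 r)^[K + 2] z = (srsMap 2 r)^[K] z := by
  funext i
  fin_cases i
  · exact h2 K le_rfl
  · show ((srsMap 2 r)^[K + 2] z) 1 = ((srsMap 2 r)^[K] z) 1
    rw [srs_shift r z (K + 2), srs_shift r z K]
    have h := h2 (K + 1) (Nat.le_succ K)
    have e : K + 1 + 2 = K + 2 + 1 := by omega
    rwa [e] at h

/-- for `r = (x, x+1)` with `-1 ≤ x < 1` or `r = (x, -x-1)` with
`-1 ≤ x ≤ 0`, one has `r ∈ D_2 ∖ D_2^{(0)}`: every orbit of `τ_r` is ultimately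
periodic, but some orbit never reaches `(0,0)`. -/
theorem boundary_D2_real_roots (r : Fin 2 → ℝ)
    (hcase : (∃ x : ℝ, -1 ≤ x ∧ x < 1 ∧ r = ![x, x + 1])
      ∨ (∃ x : ℝ, -1 ≤ x ∧ x ≤ 0 ∧ r = ![x, -x - 1])) :
    (∀ z : Fin 2 → ℤ,
        ∃ k l : ℕ, 1 ≤ l ∧ (srsMap 2 r)^[k + l] z = (srsMap 2 r)^[k] z)
    ∧ (∃ z : Fin 2 → ℤ, ∀ k : ℕ, (srsMap 2 r)^[k] z ≠ 0) := by
  constructor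
  · intro z
    set a : ℕ → ℤ := fun n => ((srsMap 2 r)^[n] z) 0 with ha
    suffices h : ∃ K, ∀ k, K ≤ k → a (k + 2) = a k by
      obtain ⟨K, hK⟩ := h
      exact ⟨K, 2, one_le_two, srs_per r z K hK⟩
    rcases hcase with ⟨x, hx1, hx2, hr⟩ | ⟨x, hx1, hx2, hr⟩
    · -- r = (x, x+1)
      subst hr
      set f : ℤ → ℤ := fun t => -⌊x * (t : ℝ)⌋ with hf
      have hxabs : |x| ≤ 1 := abs_le.mpr ⟨hx1, hx2.le⟩
      have hrec : ∀ n, a (n + 2) = -⌊x * (a n : ℝ) + (x + 1) * (a (n + 1) : ℝ)⌋ := by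
        intro n
        have h := srs_rec ![x, x + 1] z n
        simp only [Matrix.cons_val_zero, Matrix.cons_val_one, Matrix.head_cons] at h
        exact h
      have hs : ∀ n, a n + a (n + 1) = f^[n] (a 0 + a 1) := by
        intro n
        induction n with
        | zero => rfl
        | succ n ih =>
          rw [Function.iterate_succ_apply', ← ih, hrec n, hf]
          have e : (x * (a n : ℝ) + (x + 1) * (a (n + 1) : ℝ))
              = x * ((a n + a (n + 1) : ℤ) : ℝ) + ((a (n + 1) : ℤ) : ℝ) := by
            push_cast; ring
          rw [e, Int.floor_add_intCast]
          ring
      have hfa : ∀ s, (f s).natAbs ≤ s.natAbs := fun s => floor_bound x hxabs s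
      have hfb : ∀ s : ℤ, 0 < s → f s ≠ -s := by
        intro s hs0 hcontra
        simp only [hf, neg_inj] at hcontra
        have h1 : (s : ℝ) ≤ x * s := by
          have h := Int.floor_le (x * (s : ℝ))
          rw [hcontra] at h
          exact h
        have hs' : (1 : ℝ) ≤ (s : ℝ) := by exact_mod_cast hs0
        nlinarith
      obtain ⟨K, hK⟩ := srs_evconst f hfa hfb (a 0 + a 1)
      refine ⟨K, fun k hk => ?_⟩
      have h1 := hK k hk
      rw [← hs k, ← hs (k + 1)] at h1
      have e : k + 1 + 1 = k + 2 := by omega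
      rw [e] at h1
      omega
    · -- r = (x, -x-1)
      subst hr
      set g : ℤ → ℤ := fun t => -⌊(-x) * (t : ℝ)⌋ with hg
      have hxabs : |(-x)| ≤ 1 := abs_le.mpr ⟨by linarith, by linarith⟩
      have hrec : ∀ n, a (n + 2) = -⌊x * (a n : ℝ) + (-x - 1) * (a (n + 1) : ℝ)⌋ := by
        intro n
        have h := srs_rec ![x, -x - 1] z n
        simp only [Matrix.cons_val_zero, Matrix.cons_val_one, Matrix.head_cons] at h
        exact h
      have hd : ∀ n, a (n + 1) - a n = g^[n] (a 1 - a 0) := by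
        intro n
        induction n with
        | zero => rfl
        | succ n ih =>
          rw [Function.iterate_succ_apply', ← ih, hrec n, hg]
          have e : (x * (a n : ℝ) + (-x - 1) * (a (n + 1) : ℝ))
              = (-x) * ((a (n + 1) - a n : ℤ) : ℝ) + ((-(a (n + 1)) : ℤ) : ℝ) := by
            push_cast; ring
          rw [e, Int.floor_add_intCast]
          push_cast
          ring
      have hga : ∀ s, (g s).natAbs ≤ s.natAbs := fun s => floor_bound (-x) hxabs s
      have hgb : ∀ s : ℤ, s ≠ 0 → g s ≠ s := by
        intro s hs0 hcontra
        simp only [hg] at hcontra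
        have hfl : ⌊(-x) * (s : ℝ)⌋ = -s := by omega
        have hle : -(s : ℝ) ≤ (-x) * s := by
          have h := Int.floor_le ((-x) * (s : ℝ))
          rw [hfl] at h
          push_cast at h
          exact h
        have hlt : (-x) * (s : ℝ) < -(s : ℝ) + 1 := by
          have h := Int.lt_floor_add_one ((-x) * (s : ℝ))
          rw [hfl] at h
          push_cast at h
          exact h
        have hy0 : (0 : ℝ) ≤ -x := by linarith
        rcases hs0.lt_or_gt with h | h
        · have hsr : (s : ℝ) ≤ -1 := by exact_mod_cast (by omega : s ≤ -1)
          have : (0 : ℝ) ≤ (-x) * (-(s : ℝ)) := mul_nonneg hy0 (by linarith)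
          nlinarith
        · have hsr : (1 : ℝ) ≤ (s : ℝ) := by exact_mod_cast h
          have : (0 : ℝ) ≤ (-x) * (s : ℝ) := mul_nonneg hy0 (by linarith)
          nlinarith
      obtain ⟨K, hK⟩ := srs_evalt g hga hgb (a 1 - a 0)
      refine ⟨K, fun k hk => ?_⟩
      have h1 := hK k hk
      rw [← hd k, ← hd (k + 1)] at h1
      have e : k + 1 + 1 = k + 2 := by omega
      rw [e] at h1
      omega
  · rcases hcase with ⟨x, hx1, hx2, hr⟩ | ⟨x, hx1, hx2, hr⟩
    · subst hr
      refine ⟨![1, -1], fun k => ?_⟩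
      have key : ∀ k, (srsMap 2 ![x, x + 1])^[k] ![1, -1] = ![1, -1]
          ∨ (srsMap 2 ![x, x + 1])^[k] ![1, -1] = ![(-1 : ℤ), 1] := by
        intro k
        induction k with
        | zero => left; rfl
        | succ n ih =>
          rw [Function.iterate_succ_apply']
          rcases ih with h | h <;> rw [h]
          · right
            apply fin2_ext
            · rw [srs0]; rfl
            · rw [srs1]
              norm_num
          · left
            apply fin2_ext
            · rw [srs0]; rfl
            · rw [srs1]
              norm_num
      intro hzero
      rcases key k with h | h <;> rw [h] at hzero <;>
        simpa using congrFun hzero 0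
    · subst hr
      refine ⟨![1, 1], fun k => ?_⟩
      have hfix : srsMap 2 ![x, -x - 1] ![1, 1] = ![1, 1] := by
        apply fin2_ext
        · rw [srs0]; rfl
        · rw [srs1]
          simp only [Matrix.cons_val_zero, Matrix.cons_val_one, Matrix.head_cons]
          rw [show x * ((1 : ℤ) : ℝ) + (-x - 1) * ((1 : ℤ) : ℝ) = -1 by push_cast; ring]
          norm_num
      rw [Function.iterate_fixed hfix]
      intro hzero
      simpa using congrFun hzero 0
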